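/- The matrix B_Q is even, negative definite, and has determinant 64: every diagonal entry of B_Q is even, x^T B_Q x < 0 for every nonzero x ∈ ℚ⁶, and det B_Q = 64. -/

import Mathlib

open Matrix

/-- The Gram matrix `B_Q` of the rank-6 lattice `Q` such that the Néron–Severi lattice of a
triple-double K3 surface with minimal Picard number is isometric to `U ⊕ E₈ ⊕ Q`. -/
def B_Q : Matrix (Fin 6) (Fin 6) ℤ :=
  !![-2,  0,  1,   0,  2,  -1;
      0, -6, -1,  -4,  4,  -5;
      1, -1, -8,   6,  2,   0;
      0, -4,  6, -16,  4,  -2;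
      2,  4,  2,   4, -8,   6;
     -1, -5,  0,  -2,  6, -12]

/-- `B_Q` viewed as a rational matrix. -/
def B_Qℚ : Matrix (Fin 6) (Fin 6) ℚ := B_Q.map ((↑) : ℤ → ℚ)

/-- The matrix `B_Q` is even (every diagonal entry is even), negative definite
(`x^T B_Q x < 0` for every nonzero rational vector `x`), and has determinant `64`. -/
@[simp]
lemma cons_val_five' {α : Type*} {m : ℕ} (x : α) (u : Fin (m+5) → α) :
    Matrix.vecCons x u 5 = Matrix.vecHead (Matrix.vecTail (Matrix.vecTail (Matrix.vecTail (Matrix.vecTail u)))) :=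
  rfl

lemma cons_val_two'' {α : Type*} {m : ℕ} (x : α) (u : Fin (m+2) → α) :
    Matrix.vecCons x u 2 = u 1 := rfl

lemma cons_val_three'' {α : Type*} {m : ℕ} (x : α) (u : Fin (m+3) → α) :
    Matrix.vecCons x u 3 = u 2 := rfl

lemma cons_val_four'' {α : Type*} {m : ℕ} (x : α) (u : Fin (m+4) → α) :
    Matrix.vecCons x u 4 = u 3 := rfl

def Lmat : Matrix (Fin 6) (Fin 6) ℚ :=
  !![1, 0, 0, 0, 0, 0;
     0, 1, 0, 0, 0, 0;
     -1/2, 1/6, 1, 0, 0, 0;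
     0, 2/3, -10/11, 1, 0, 0;
     -1, -2/3, -7/22, -19/40, 1, 0;
     1/2, 5/6, -1/22, -9/40, -51/19, 1]

def Umat : Matrix (Fin 6) (Fin 6) ℚ :=
  !![-2, 0, 1, 0, 2, -1;
     0, -6, -1, -4, 4, -5;
     0, 0, -22/3, 20/3, 7/3, 1/3;
     0, 0, 0, -80/11, 38/11, 18/11;
     0, 0, 0, 0, -19/20, 51/20;
     0, 0, 0, 0, 0, -2/19]

set_option maxHeartbeats 1000000 in
set_option maxRecDepth 2000 in
theorem stmt_0 :
    (∀ i : Fin 6, Even (B_Q i i)) ∧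
    (∀ x : Fin 6 → ℚ, x ≠ 0 → x ⬝ᵥ (B_Qℚ *ᵥ x) < 0) ∧
    B_Q.det = 64 := by
  refine ⟨by decide, ?_, ?_⟩
  · intro x hx
    set a := x 0 with ha
    set b := x 1 with hb
    set c := x 2 with hc
    set d := x 3 with hd
    set e := x 4 with he
    set f := x 5 with hf
    have key : x ⬝ᵥ (B_Qℚ *ᵥ x) =
        -((2*a - c - 2*e + f)^2/2 + (6*b + c + 4*d - 4*e + 5*f)^2/6
          + (22*c - 20*d - 7*e - f)^2/66 + (40*d - 19*e - 9*f)^2/220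
          + (19*e - 51*f)^2/380 + (2/19)*f^2) := by
      simp [B_Qℚ, B_Q, dotProduct, mulVec, Fin.sum_univ_six, ha, hb, hc, hd, he, hf]
      ring
    rw [key]
    have h0 := sq_nonneg (2*a - c - 2*e + f)
    have h1 := sq_nonneg (6*b + c + 4*d - 4*e + 5*f)
    have h2 := sq_nonneg (22*c - 20*d - 7*e - f)
    have h3 := sq_nonneg (40*d - 19*e - 9*f)
    have h4 := sq_nonneg (19*e - 51*f)
    have h5 := sq_nonneg f
    by_contra hcon
    push_neg at hcon
    have e0 : (2*a - c - 2*e + f)^2 = 0 := by linarith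
    have e1 : (6*b + c + 4*d - 4*e + 5*f)^2 = 0 := by linarith
    have e2 : (22*c - 20*d - 7*e - f)^2 = 0 := by linarith
    have e3 : (40*d - 19*e - 9*f)^2 = 0 := by linarith
    have e4 : (19*e - 51*f)^2 = 0 := by linarith
    have e5 : f^2 = 0 := by linarith
    rw [pow_eq_zero_iff (by norm_num)] at e0 e1 e2 e3 e4 e5
    have hF : f = 0 := e5
    have hE : e = 0 := by linarith
    have hD : d = 0 := by linarith
    have hC : c = 0 := by linarith
    have hB : b = 0 := by linarith
    have hA : a = 0 := by linarith
    apply hx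
    funext i
    fin_cases i
    · exact hA
    · exact hB
    · exact hC
    · exact hD
    · exact hE
    · exact hF
  · have factor : B_Qℚ = Lmat * Umat := by
      ext i j
      fin_cases i <;> fin_cases j <;>
        norm_num [B_Qℚ, B_Q, Lmat, Umat, Matrix.mul_apply, Fin.sum_univ_six,
          Matrix.vecHead, Matrix.vecTail, cons_val_two'', cons_val_three'', cons_val_four'']
    have hL : Lmat.BlockTriangular OrderDual.toDual := by
      intro i j hij
      fin_cases i <;> fin_cases j <;>
        first
          | exact absurd hij (by decide)
          | norm_num [Lmat]
    have hU : Umat.BlockTriangular id := by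
      intro i j hij
      fin_cases i <;> fin_cases j <;>
        first
          | exact absurd hij (by decide)
          | norm_num [Umat]
    have hdetL : Lmat.det = 1 := by
      rw [Matrix.det_of_lowerTriangular _ hL, Fin.prod_univ_six]
      norm_num [Lmat, cons_val_two'', cons_val_three'', cons_val_four'']
    have hdetU : Umat.det = 64 := by
      rw [Matrix.det_of_upperTriangular hU, Fin.prod_univ_six]
      norm_num [Umat, cons_val_two'', cons_val_three'', cons_val_four'']
    have hQ : B_Qℚ.det = 64 := by rw [factor, Matrix.det_mul, hdetL, hdetU, one_mul]
    have h3 : (Int.castRingHom ℚ).mapMatrix B_Q = B_Qℚ := by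
      ext i j; simp [B_Qℚ]
    have h2 : (Int.castRingHom ℚ) B_Q.det = (Int.castRingHom ℚ) 64 := by
      rw [RingHom.map_det, h3, hQ]; norm_num
    exact Int.cast_injective (α := ℚ) h2
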